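/- arXiv:1706.00075 — 2 statements merged into one kernel-verified Lean document; each statement's English description precedes it below -/
import Mathlib

section
/- Let H₁ and H₂ be subgroups of GL₂(ℤ/p²ℤ) such that for each i = 1, 2 every element of φ(Hᵢ) is a scalar matrix (of the form w·1 with w ∈ (ℤ/pℤ)ˣ). Then H₁ and H₂ are nontrivially locally conjugate in GL₂(ℤ/p²ℤ) if and only if φ(H₁) = φ(H₂) and the subgroups H₁ ∩ ker φ and H₂ ∩ ker φ are nontrivially locally conjugate in GL₂(ℤ/p²ℤ). -/
open Matrix

/-- `GL₂(ℤ/nℤ)`. -/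
abbrev GL2 (n : ℕ) : Type := GL (Fin 2) (ZMod n)

/-- Reduction modulo `p` from `ℤ/p²ℤ` to `ℤ/pℤ`. -/
def red (p : ℕ) : ZMod (p^2) →+* ZMod p :=
  ZMod.castHom (dvd_pow_self p (by norm_num)) (ZMod p)

/-- The natural homomorphism `φ : GL₂(ℤ/p²ℤ) →* GL₂(ℤ/pℤ)` given by entrywise
reduction modulo `p`. -/
def phi (p : ℕ) : GL2 (p^2) →* GL2 p :=
  Matrix.GeneralLinearGroup.map (red p)

/-- The element `1 + p • A` of `GL₂(ℤ/p²ℤ)` (its inverse is `1 - p • A`). -/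
def kerUnit {p : ℕ} (A : Matrix (Fin 2) (Fin 2) (ZMod (p^2))) : GL2 (p^2) where
  val := 1 + (p : ZMod (p^2)) • A
  inv := 1 - (p : ZMod (p^2)) • A
  val_inv := by
    have h : ((p : ZMod (p^2)) • A) * ((p : ZMod (p^2)) • A) = 0 := by
      rw [smul_mul_assoc, mul_smul_comm, smul_smul, ← Nat.cast_mul, ← pow_two,
        ZMod.natCast_self, zero_smul]
    rw [add_mul, one_mul, mul_sub, mul_one, h, sub_zero]
    abel
  inv_val := by
    have h : ((p : ZMod (p^2)) • A) * ((p : ZMod (p^2)) • A) = 0 := by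
      rw [smul_mul_assoc, mul_smul_comm, smul_smul, ← Nat.cast_mul, ← pow_two,
        ZMod.natCast_self, zero_smul]
    rw [sub_mul, one_mul, mul_add, mul_one, h, add_zero]
    abel

/-- The antidiagonal swap matrix `!![0,1;1,0]` as an element of `GL₂(ℤ/p²ℤ)`. -/
def swapGL (p : ℕ) : GL2 (p^2) where
  val := !![0, 1; 1, 0]
  inv := !![0, 1; 1, 0]
  val_inv := by
    ext i j
    fin_cases i <;> fin_cases j <;>
      simp [Matrix.mul_apply, Fin.sum_univ_succ, Matrix.one_apply]
  inv_val := by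
    ext i j
    fin_cases i <;> fin_cases j <;>
      simp [Matrix.mul_apply, Fin.sum_univ_succ, Matrix.one_apply]

section Aux
variable {p : ℕ} [hpf : Fact p.Prime]

lemma aux_pow_add {A : Type*} [Ring A] (a x : A) (hc : a * x = x * a) (hx : x * x = 0) :
    ∀ n : ℕ, (a + x) ^ (n + 1) = a ^ (n + 1) + (n + 1) • (a ^ n * x) := by
  intro n
  induction n with
  | zero => simp
  | succ n ih =>
    rw [pow_succ, ih, add_mul, mul_add, mul_add, smul_mul_assoc, smul_mul_assoc,
      mul_assoc (a ^ n) x x, hx, mul_zero, smul_zero, add_zero,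
      mul_assoc (a ^ n) x a, ← hc, ← mul_assoc, ← pow_succ, ← pow_succ,
      succ_nsmul (a ^ (n + 1) * x) (n + 1)]
    abel

lemma p_mul_p : ((p : ZMod (p^2)) * (p : ZMod (p^2))) = 0 := by
  rw [← Nat.cast_mul, ← pow_two, ZMod.natCast_self]

lemma red_zero (x : ZMod (p^2)) (h : red p x = 0) : ∃ t : ZMod (p^2), x = (p : ZMod (p^2)) * t := by
  have hne : NeZero (p^2) := ⟨pow_ne_zero 2 hpf.out.ne_zero⟩
  obtain ⟨n, rfl⟩ := ZMod.natCast_zmod_surjective x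
  rw [red, map_natCast] at h
  obtain ⟨m, rfl⟩ := (ZMod.natCast_eq_zero_iff n p).mp h
  exact ⟨(m : ZMod (p^2)), by push_cast; ring⟩

/-- scalar element of GL2 -/
def scGL (p : ℕ) : (ZMod (p^2))ˣ →* GL2 (p^2) :=
  Units.map (Matrix.scalar (Fin 2)).toMonoidHom

lemma scGL_val (c : (ZMod (p^2))ˣ) : (scGL p c).val = (c : ZMod (p^2)) • 1 := by
  simp [scGL, Matrix.scalar_apply, Matrix.smul_one_eq_diagonal]

lemma scGL_central (c : (ZMod (p^2))ˣ) (g : GL2 (p^2)) : scGL p c * g = g * scGL p c := by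
  ext : 1
  show (scGL p c).val * g.val = g.val * (scGL p c).val
  rw [scGL_val, smul_mul_assoc, one_mul, mul_smul_comm, mul_one]

lemma conj_central_eq {n : ℕ} (a b : GL2 n) (c : ZMod n) (hc : (a : Matrix (Fin 2) (Fin 2) (ZMod n)) = c • 1)
    (h : IsConj a b) : b = a := by
  obtain ⟨u, hu⟩ := isConj_iff.mp h
  have hcen : u * a = a * u := by
    ext : 1
    show u.val * a.val = a.val * u.val
    rw [hc, smul_mul_assoc, one_mul, mul_smul_comm, mul_one]
  rw [← hu, hcen, mul_assoc, mul_inv_cancel, mul_one]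

lemma phi_val (g : GL2 (p^2)) : (phi p g).val = g.val.map (red p) := by
  rfl

end Aux

section Aux2
set_option linter.unusedSectionVars false
variable {p : ℕ} [hpf : Fact p.Prime]

lemma scalar_form (h : GL2 (p^2)) (w : (ZMod p)ˣ)
    (hw : (phi p h).val = (w : ZMod p) • 1) :
    ∃ M : Matrix (Fin 2) (Fin 2) (ZMod (p^2)),
      h.val = (h.val 0 0) • 1 + (p : ZMod (p^2)) • M := by
  have hentry : ∀ i j, red p (h.val i j) = (w : ZMod p) * (1 : Matrix (Fin 2) (Fin 2) (ZMod p)) i j := by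
    intro i j
    have := congrFun (congrFun (congrArg (fun m => m) hw) i) j
    simpa [phi_val, Matrix.map_apply, Matrix.smul_apply, smul_eq_mul] using this
  have key : ∀ i j, ∃ t, h.val i j = (h.val 0 0) * (1 : Matrix (Fin 2) (Fin 2) (ZMod (p^2))) i j
      + (p : ZMod (p^2)) * t := by
    intro i j
    have h00 : red p (h.val 0 0) = (w : ZMod p) := by
      have := hentry 0 0; rwa [Matrix.one_apply_eq, mul_one] at this
    have hd : red p (h.val i j - h.val 0 0 * (1 : Matrix (Fin 2) (Fin 2) (ZMod (p^2))) i j) = 0 := by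
      rw [map_sub, _root_.map_mul, hentry i j, h00]
      by_cases hij : i = j
      · subst hij; simp [Matrix.one_apply_eq]
      · simp [Matrix.one_apply_ne hij]
    obtain ⟨t, ht⟩ := red_zero _ hd
    exact ⟨t, by linear_combination ht⟩
  choose M hM using key
  refine ⟨fun i j => M i j, ?_⟩
  ext i j
  simp only [Matrix.add_apply, Matrix.smul_apply, smul_eq_mul]
  exact hM i j

lemma val_pow_p (h : GL2 (p^2)) (w : (ZMod p)ˣ)
    (hw : (phi p h).val = (w : ZMod p) • 1) :
    (h ^ p).val = ((h.val 0 0) ^ p) • 1 := by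
  obtain ⟨M, hM⟩ := scalar_form h w hw
  set u := h.val 0 0 with hu
  have hps : p = (p - 1) + 1 := (Nat.succ_pred_eq_of_pos hpf.out.pos).symm
  have hcomm : (u • (1 : Matrix (Fin 2) (Fin 2) (ZMod (p^2)))) * ((p : ZMod (p^2)) • M)
      = ((p : ZMod (p^2)) • M) * (u • 1) := by
    rw [smul_mul_assoc, one_mul, mul_smul_comm, mul_one]
  have hxx : ((p : ZMod (p^2)) • M) * ((p : ZMod (p^2)) • M) = 0 := by
    rw [smul_mul_assoc, mul_smul_comm, smul_smul, p_mul_p, zero_smul]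
  have key := aux_pow_add (u • (1 : Matrix (Fin 2) (Fin 2) (ZMod (p^2)))) ((p : ZMod (p^2)) • M)
    hcomm hxx (p - 1)
  rw [← hps] at key
  rw [Units.val_pow_eq_pow_val, hM, key, smul_pow, one_pow, mul_smul_comm,
    ← Nat.cast_smul_eq_nsmul (ZMod (p^2)), smul_smul, p_mul_p, zero_smul, add_zero]

lemma pow_p_scalar (h : GL2 (p^2)) (w : (ZMod p)ˣ)
    (hw : (phi p h).val = (w : ZMod p) • 1) :
    ∃ c : (ZMod (p^2))ˣ, h ^ p = scGL p c := by
  have hval := val_pow_p h w hw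
  have hunit : IsUnit ((h.val 0 0) ^ p) := by
    have h1 : IsUnit ((h ^ p).val) := (h ^ p).isUnit
    rw [hval] at h1
    have h2 := (Matrix.isUnit_iff_isUnit_det _).mp h1
    rw [Matrix.det_smul, Matrix.det_one, mul_one] at h2
    simp only [Fintype.card_fin] at h2
    exact (isUnit_pow_iff two_ne_zero).mp h2
  obtain ⟨c, hc⟩ := hunit
  exact ⟨c, Units.ext (by rw [hval, scGL_val, hc])⟩

end Aux2

section Aux3
set_option linter.unusedSectionVars false
variable {p : ℕ} [hpf : Fact p.Prime]

lemma card_units_p2 : Fintype.card (ZMod (p^2))ˣ = p * (p - 1) := by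
  have hne : NeZero (p^2) := ⟨pow_ne_zero 2 hpf.out.ne_zero⟩
  rw [ZMod.card_units_eq_totient, Nat.totient_prime_pow hpf.out (by norm_num)]
  norm_num

lemma units_pow_pp1 (c : (ZMod (p^2))ˣ) : c ^ (p * (p - 1)) = 1 := by
  have hne : NeZero (p^2) := ⟨pow_ne_zero 2 hpf.out.ne_zero⟩
  rw [← card_units_p2]; exact pow_card_eq_one

lemma sigma_eq (h : GL2 (p^2)) (c : (ZMod (p^2))ˣ) (hc : h ^ p = scGL p c) :
    h ^ (p^2) = scGL p (c ^ p) := by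
  have e : h ^ (p^2) = (h ^ p) ^ p := by
    rw [← pow_mul]; exact congrArg (h ^ ·) (sq p)
  rw [e, hc, ← map_pow]

/-- the sigma element is determined by phi, among elements with scalar image -/
lemma fiber_const (h h' : GL2 (p^2)) (w : (ZMod p)ˣ)
    (hw : (phi p h).val = (w : ZMod p) • 1) (heq : phi p h = phi p h') :
    h ^ (p^2) = h' ^ (p^2) := by
  have hw' : (phi p h').val = (w : ZMod p) • 1 := by rw [← heq, hw]
  obtain ⟨c, hc⟩ := pow_p_scalar h w hw
  obtain ⟨c', hc'⟩ := pow_p_scalar h' w hw'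
  rw [sigma_eq h c hc, sigma_eq h' c' hc']
  -- reduce to c^p = c'^p
  congr 1
  -- red (c) = red (c') : from phi (h^p) = phi (h'^p)
  have hred : red p ((c : ZMod (p^2))) = red p ((c' : ZMod (p^2))) := by
    have h1 : phi p (h ^ p) = phi p (h' ^ p) := by rw [map_pow, map_pow, heq]
    rw [hc, hc'] at h1
    have h2 : ((phi p (scGL p c)).val : Matrix (Fin 2) (Fin 2) (ZMod p)) 0 0
        = ((phi p (scGL p c')).val : Matrix (Fin 2) (Fin 2) (ZMod p)) 0 0 := by rw [h1]
    simpa [phi_val, scGL_val, Matrix.map_apply, Matrix.smul_apply, Matrix.one_apply_eq]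
      using h2
  -- write c = c' + p t and conclude c^p = c'^p
  obtain ⟨t, ht⟩ := red_zero ((c : ZMod (p^2)) - (c' : ZMod (p^2))) (by rw [map_sub, hred, sub_self])
  have hxx : ((p : ZMod (p^2)) * t) * ((p : ZMod (p^2)) * t) = 0 := by
    rw [mul_mul_mul_comm, p_mul_p, zero_mul]
  have hval : (c : ZMod (p^2)) = (c' : ZMod (p^2)) + (p : ZMod (p^2)) * t := by
    linear_combination ht
  have hps : p = (p - 1) + 1 := (Nat.succ_pred_eq_of_pos hpf.out.pos).symm
  have key := aux_pow_add ((c' : ZMod (p^2))) ((p : ZMod (p^2)) * t)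
    (mul_comm _ _) hxx (p - 1)
  rw [← hps] at key
  have hpow : (c : ZMod (p^2)) ^ p = (c' : ZMod (p^2)) ^ p := by
    rw [hval, key, ← Nat.cast_smul_eq_nsmul (ZMod (p^2)), smul_eq_mul,
      show ((c' : ZMod (p^2)) ^ (p-1) * ((p : ZMod (p^2)) * t)) = (p : ZMod (p^2)) * ((c' : ZMod (p^2)) ^ (p-1) * t) by ring,
      ← mul_assoc, p_mul_p, zero_mul, add_zero]
  exact Units.ext (by rw [Units.val_pow_eq_pow_val, Units.val_pow_eq_pow_val, hpow])

lemma phi_sigma (h : GL2 (p^2)) (w : (ZMod p)ˣ)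
    (hw : (phi p h).val = (w : ZMod p) • 1) :
    phi p (h ^ (p^2)) = phi p h := by
  rw [map_pow]
  have hW : phi p h = Units.map (Matrix.scalar (Fin 2)).toMonoidHom w := by
    apply Units.ext
    rw [hw, Units.coe_map]
    simp [Matrix.scalar_apply, Matrix.smul_one_eq_diagonal]
  rw [hW, ← map_pow]
  congr 1
  -- w ^ (p^2) = w
  obtain ⟨q, hq⟩ : ∃ q, p = q + 1 := ⟨p - 1, (Nat.succ_pred_eq_of_pos hpf.out.pos).symm⟩
  have harith : p ^ 2 = (p - 1) * (p + 1) + 1 := by subst hq; simp; ring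
  rw [harith, pow_succ, pow_mul, ZMod.units_pow_card_sub_one_eq_one, one_pow, one_mul]

end Aux3

section Aux4
set_option linter.unusedSectionVars false
variable {p : ℕ} [hpf : Fact p.Prime]

lemma conj_central_shuffle {G : Type*} [Group G] (S g y : G) (hc : S * g = g * S) :
    g * (S * y) * g⁻¹ = S * (g * y * g⁻¹) := by
  rw [← mul_assoc g S y, ← hc, mul_assoc S g y, mul_assoc S (g * y) g⁻¹]

lemma hsig_scalar (h : GL2 (p^2)) (w : (ZMod p)ˣ)
    (hw : (phi p h).val = (w : ZMod p) • 1) :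
    ∃ c, h ^ (p^2) = scGL p c := by
  obtain ⟨c, hc⟩ := pow_p_scalar h w hw
  exact ⟨c ^ p, sigma_eq h c hc⟩

lemma hker_conj (g : GL2 (p^2)) :
    Subgroup.map (MulAut.conj g).toMonoidHom ((phi p).ker) = (phi p).ker := by
  ext x
  simp only [Subgroup.mem_map, MulEquiv.coe_toMonoidHom, MulAut.conj_apply,
    MonoidHom.mem_ker]
  constructor
  · rintro ⟨k, hk, rfl⟩
    simp [_root_.map_mul, hk]
  · intro hx
    exact ⟨g⁻¹ * x * g, by simp [_root_.map_mul, hx], by group⟩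

end Aux4

/-- Subgroups `H₁` and `H₂` of a group `G` are locally conjugate in `G` if there is a
bijection `f : H₁ → H₂` such that `h` and `f h` are conjugate in `G` for every `h ∈ H₁`. -/
def IsLocallyConjugate {G : Type*} [Group G] (H₁ H₂ : Subgroup G) : Prop :=
  ∃ f : H₁ ≃ H₂, ∀ h : H₁, IsConj (h : G) ((f h : G))

/-- Subgroups `H₁` and `H₂` of `G` are conjugate in `G`: `g H₁ g⁻¹ = H₂` for some `g`. -/
def IsConjugateSubgroup {G : Type*} [Group G] (H₁ H₂ : Subgroup G) : Prop :=
  ∃ g : G, Subgroup.map (MulAut.conj g).toMonoidHom H₁ = H₂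

/-- Nontrivially locally conjugate: locally conjugate but not conjugate. -/
def IsNontriviallyLocallyConjugate {G : Type*} [Group G] (H₁ H₂ : Subgroup G) : Prop :=
  IsLocallyConjugate H₁ H₂ ∧ ¬ IsConjugateSubgroup H₁ H₂

set_option maxHeartbeats 1000000

/-- (The center case.) Suppose every element of `φ(Hᵢ)` is a scalar
matrix `w • 1` with `w ∈ (ℤ/pℤ)ˣ`. Then `H₁` and `H₂` are nontrivially locally
conjugate in `GL₂(ℤ/p²ℤ)` iff `φ(H₁) = φ(H₂)` and `H₁ ∩ ker φ` and `H₂ ∩ ker φ` are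
nontrivially locally conjugate in `GL₂(ℤ/p²ℤ)`. -/
theorem center_case {p : ℕ} [Fact p.Prime] (hp : Odd p)
    (H₁ H₂ : Subgroup (GL2 (p^2)))
    (h₁ : ∀ g ∈ H₁, ∃ w : (ZMod p)ˣ,
      (↑(phi p g) : Matrix (Fin 2) (Fin 2) (ZMod p)) = (w : ZMod p) • 1)
    (h₂ : ∀ g ∈ H₂, ∃ w : (ZMod p)ˣ,
      (↑(phi p g) : Matrix (Fin 2) (Fin 2) (ZMod p)) = (w : ZMod p) • 1) :
    IsNontriviallyLocallyConjugate H₁ H₂ ↔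
      (H₁.map (phi p) = H₂.map (phi p) ∧
        IsNontriviallyLocallyConjugate (H₁ ⊓ (phi p).ker) (H₂ ⊓ (phi p).ker)) := by
  classical
  -- cross sigma membership
  have hsig_cross : ∀ (A B : Subgroup (GL2 (p^2))),
      A.map (phi p) = B.map (phi p) →
      (∀ g ∈ A, ∃ w : (ZMod p)ˣ,
        (↑(phi p g) : Matrix (Fin 2) (Fin 2) (ZMod p)) = (w : ZMod p) • 1) →
      ∀ h ∈ A, h ^ (p^2) ∈ B := by
    intro A B hAB hA h hh
    have hx : phi p h ∈ B.map (phi p) := by rw [← hAB]; exact ⟨h, hh, rfl⟩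
    obtain ⟨h', hh', he⟩ := hx
    obtain ⟨w, hw⟩ := hA h hh
    rw [fiber_const h h' w hw he.symm]
    exact pow_mem hh' _
  have hkdec : ∀ (A : Subgroup (GL2 (p^2))),
      (∀ g ∈ A, ∃ w : (ZMod p)ˣ,
        (↑(phi p g) : Matrix (Fin 2) (Fin 2) (ZMod p)) = (w : ZMod p) • 1) →
      ∀ h ∈ A, (h ^ (p^2))⁻¹ * h ∈ A ⊓ (phi p).ker := by
    intro A hA h hh
    obtain ⟨w, hw⟩ := hA h hh
    refine Subgroup.mem_inf.mpr ⟨mul_mem (inv_mem (pow_mem hh _)) hh, ?_⟩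
    rw [MonoidHom.mem_ker, _root_.map_mul, map_inv, phi_sigma h w hw, inv_mul_cancel]
  constructor
  · rintro ⟨⟨f, hf⟩, hnc⟩
    have hphif : ∀ a : ↥H₁, phi p ((f a : GL2 (p^2))) = phi p (a : GL2 (p^2)) := by
      intro a
      obtain ⟨w, hw⟩ := h₁ a a.2
      exact conj_central_eq (phi p (a : GL2 (p^2))) _ ((w : ZMod p)) hw
        ((phi p).map_isConj (hf a))
    have hphifs : ∀ b : ↥H₂, phi p ((f.symm b : GL2 (p^2))) = phi p (b : GL2 (p^2)) := by
      intro b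
      have := hphif (f.symm b)
      rw [f.apply_symm_apply] at this
      exact this.symm
    have himg : H₁.map (phi p) = H₂.map (phi p) := by
      ext x
      simp only [Subgroup.mem_map]
      constructor
      · rintro ⟨h, hh, rfl⟩
        exact ⟨f ⟨h, hh⟩, (f ⟨h, hh⟩).2, hphif ⟨h, hh⟩⟩
      · rintro ⟨h, hh, rfl⟩
        exact ⟨f.symm ⟨h, hh⟩, (f.symm ⟨h, hh⟩).2, hphifs ⟨h, hh⟩⟩
    have hsig12 := hsig_cross H₁ H₂ himg h₁
    refine ⟨himg, ⟨?_, ?_⟩⟩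
    · -- local conjugacy of kernels
      have hker1 : ∀ a : ↥H₁, (a : GL2 (p^2)) ∈ (phi p).ker →
          ((f a : GL2 (p^2))) ∈ (phi p).ker := by
        intro a ha
        rw [MonoidHom.mem_ker] at ha ⊢
        rw [hphif a, ha]
      have hker2 : ∀ b : ↥H₂, (b : GL2 (p^2)) ∈ (phi p).ker →
          ((f.symm b : GL2 (p^2))) ∈ (phi p).ker := by
        intro b hb
        rw [MonoidHom.mem_ker] at hb ⊢
        rw [hphifs b, hb]
      refine ⟨⟨fun k => ⟨f ⟨k.1, (Subgroup.mem_inf.mp k.2).1⟩,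
          Subgroup.mem_inf.mpr ⟨(f ⟨k.1, (Subgroup.mem_inf.mp k.2).1⟩).2,
            hker1 _ (Subgroup.mem_inf.mp k.2).2⟩⟩,
        fun k => ⟨f.symm ⟨k.1, (Subgroup.mem_inf.mp k.2).1⟩,
          Subgroup.mem_inf.mpr ⟨(f.symm ⟨k.1, (Subgroup.mem_inf.mp k.2).1⟩).2,
            hker2 _ (Subgroup.mem_inf.mp k.2).2⟩⟩, ?_, ?_⟩, ?_⟩
      · intro k
        apply Subtype.ext
        show ((f.symm (f ⟨k.1, (Subgroup.mem_inf.mp k.2).1⟩) : ↥H₁) : GL2 (p^2)) = (k : GL2 (p^2))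
        rw [f.symm_apply_apply]
      · intro k
        apply Subtype.ext
        show ((f (f.symm ⟨k.1, (Subgroup.mem_inf.mp k.2).1⟩) : ↥H₂) : GL2 (p^2)) = (k : GL2 (p^2))
        rw [f.apply_symm_apply]
      · intro k
        exact hf ⟨k.1, (Subgroup.mem_inf.mp k.2).1⟩
    · -- kernels not conjugate
      rintro ⟨g, hg⟩
      apply hnc
      refine ⟨g, ?_⟩
      ext x
      simp only [Subgroup.mem_map, MulEquiv.coe_toMonoidHom, MulAut.conj_apply]
      constructor
      · rintro ⟨h, hh, rfl⟩
        obtain ⟨w, hw⟩ := h₁ h hh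
        obtain ⟨c, hc⟩ := hsig_scalar h w hw
        have hk : (h ^ (p^2))⁻¹ * h ∈ H₁ ⊓ (phi p).ker := hkdec H₁ h₁ h hh
        have hk2 : g * ((h ^ (p^2))⁻¹ * h) * g⁻¹ ∈ H₂ ⊓ (phi p).ker := by
          rw [← hg]
          exact Subgroup.mem_map.mpr ⟨_, hk, by simp [MulAut.conj_apply]⟩
        have he : g * h * g⁻¹ = (h ^ (p^2)) * (g * ((h ^ (p^2))⁻¹ * h) * g⁻¹) := by
          rw [hc, ← conj_central_shuffle (scGL p c) g _ (scGL_central c g),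
            mul_inv_cancel_left]
        rw [he]
        exact mul_mem (hsig12 h hh) (Subgroup.mem_inf.mp hk2).1
      · intro hx
        obtain ⟨w, hw⟩ := h₂ x hx
        obtain ⟨c, hc⟩ := hsig_scalar x w hw
        have hkx : (x ^ (p^2))⁻¹ * x ∈ H₂ ⊓ (phi p).ker := hkdec H₂ h₂ x hx
        rw [← hg] at hkx
        obtain ⟨k, hk, hgk⟩ := hkx
        have hsig21 := hsig_cross H₂ H₁ himg.symm h₂
        refine ⟨x ^ (p^2) * k, mul_mem (hsig21 x hx) (Subgroup.mem_inf.mp hk).1, ?_⟩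
        have hgk' : g * k * g⁻¹ = (x ^ (p^2))⁻¹ * x := by
          simpa [MulAut.conj_apply] using hgk
        rw [hc] at hgk' ⊢
        rw [conj_central_shuffle (scGL p c) g k (scGL_central c g), hgk',
          mul_inv_cancel_left]
  · rintro ⟨himg, ⟨⟨f₀, hf₀⟩, hknc⟩⟩
    have hsig12 := hsig_cross H₁ H₂ himg h₁
    have hsig21 := hsig_cross H₂ H₁ himg.symm h₂
    have hmem1 : ∀ h : ↥H₁, ((h : GL2 (p^2)) ^ (p^2))⁻¹ * h ∈ H₁ ⊓ (phi p).ker :=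
      fun h => hkdec H₁ h₁ h h.2
    have hmem2 : ∀ h : ↥H₂, ((h : GL2 (p^2)) ^ (p^2))⁻¹ * h ∈ H₂ ⊓ (phi p).ker :=
      fun h => hkdec H₂ h₂ h h.2
    set F : ↥H₁ → ↥H₂ := fun h =>
      ⟨(h : GL2 (p^2)) ^ (p^2) * (f₀ ⟨_, hmem1 h⟩ : GL2 (p^2)),
        mul_mem (hsig12 h h.2) (Subgroup.mem_inf.mp (f₀ ⟨_, hmem1 h⟩).2).1⟩ with hF
    set Finv : ↥H₂ → ↥H₁ := fun h =>
      ⟨(h : GL2 (p^2)) ^ (p^2) * (f₀.symm ⟨_, hmem2 h⟩ : GL2 (p^2)),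
        mul_mem (hsig21 h h.2) (Subgroup.mem_inf.mp (f₀.symm ⟨_, hmem2 h⟩).2).1⟩ with hFinv
    have hphiF : ∀ h : ↥H₁, phi p (F h : GL2 (p^2)) = phi p (h : GL2 (p^2)) := by
      intro h
      obtain ⟨w, hw⟩ := h₁ h h.2
      have hker : phi p ((f₀ ⟨_, hmem1 h⟩ : GL2 (p^2))) = 1 :=
        MonoidHom.mem_ker.mp (Subgroup.mem_inf.mp (f₀ ⟨_, hmem1 h⟩).2).2
      show phi p (_ * _) = _
      rw [_root_.map_mul, hker, mul_one, phi_sigma _ w hw]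
    have hphiFinv : ∀ h : ↥H₂, phi p (Finv h : GL2 (p^2)) = phi p (h : GL2 (p^2)) := by
      intro h
      obtain ⟨w, hw⟩ := h₂ h h.2
      have hker : phi p ((f₀.symm ⟨_, hmem2 h⟩ : GL2 (p^2))) = 1 :=
        MonoidHom.mem_ker.mp (Subgroup.mem_inf.mp (f₀.symm ⟨_, hmem2 h⟩).2).2
      show phi p (_ * _) = _
      rw [_root_.map_mul, hker, mul_one, phi_sigma _ w hw]
    have hsigF : ∀ h : ↥H₁, ((F h : GL2 (p^2))) ^ (p^2) = (h : GL2 (p^2)) ^ (p^2) := by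
      intro h
      obtain ⟨w, hw⟩ := h₁ h h.2
      refine fiber_const _ _ w ?_ (hphiF h)
      rw [hphiF h]; exact hw
    have hsigFinv : ∀ h : ↥H₂, ((Finv h : GL2 (p^2))) ^ (p^2) = (h : GL2 (p^2)) ^ (p^2) := by
      intro h
      obtain ⟨w, hw⟩ := h₂ h h.2
      refine fiber_const _ _ w ?_ (hphiFinv h)
      rw [hphiFinv h]; exact hw
    constructor
    · -- local conjugacy
      have hleft : ∀ h : ↥H₁, Finv (F h) = h := by
        intro h
        apply Subtype.ext
        have e1 : (⟨((F h : GL2 (p^2)) ^ (p^2))⁻¹ * (F h), hmem2 (F h)⟩ :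
            ↥(H₂ ⊓ (phi p).ker)) = f₀ ⟨_, hmem1 h⟩ := by
          apply Subtype.ext
          show ((F h : GL2 (p^2)) ^ (p^2))⁻¹ * (F h : GL2 (p^2)) = _
          rw [hsigF h]
          show ((h : GL2 (p^2)) ^ (p^2))⁻¹ *
            ((h : GL2 (p^2)) ^ (p^2) * (f₀ ⟨_, hmem1 h⟩ : GL2 (p^2))) = _
          rw [inv_mul_cancel_left]
        show ((F h : GL2 (p^2)) ^ (p^2)) * (f₀.symm ⟨_, hmem2 (F h)⟩ : GL2 (p^2))
          = (h : GL2 (p^2))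
        rw [e1, f₀.symm_apply_apply, hsigF h]
        exact mul_inv_cancel_left _ _
      have hright : ∀ h : ↥H₂, F (Finv h) = h := by
        intro h
        apply Subtype.ext
        have e1 : (⟨((Finv h : GL2 (p^2)) ^ (p^2))⁻¹ * (Finv h), hmem1 (Finv h)⟩ :
            ↥(H₁ ⊓ (phi p).ker)) = f₀.symm ⟨_, hmem2 h⟩ := by
          apply Subtype.ext
          show ((Finv h : GL2 (p^2)) ^ (p^2))⁻¹ * (Finv h : GL2 (p^2)) = _
          rw [hsigFinv h]
          show ((h : GL2 (p^2)) ^ (p^2))⁻¹ *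
            ((h : GL2 (p^2)) ^ (p^2) * (f₀.symm ⟨_, hmem2 h⟩ : GL2 (p^2))) = _
          rw [inv_mul_cancel_left]
        show ((Finv h : GL2 (p^2)) ^ (p^2)) * (f₀ ⟨_, hmem1 (Finv h)⟩ : GL2 (p^2))
          = (h : GL2 (p^2))
        rw [e1, f₀.apply_symm_apply, hsigFinv h]
        exact mul_inv_cancel_left _ _
      refine ⟨⟨F, Finv, hleft, hright⟩, ?_⟩
      intro h
      obtain ⟨w, hw⟩ := h₁ h h.2
      obtain ⟨c, hc⟩ := hsig_scalar (h : GL2 (p^2)) w hw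
      obtain ⟨u, hu⟩ := isConj_iff.mp (hf₀ ⟨_, hmem1 h⟩)
      refine isConj_iff.mpr ⟨u, ?_⟩
      show u * (h : GL2 (p^2)) * u⁻¹
        = ((h : GL2 (p^2)) ^ (p^2)) * (f₀ ⟨_, hmem1 h⟩ : GL2 (p^2))
      rw [← hu]
      show u * (h : GL2 (p^2)) * u⁻¹
        = ((h : GL2 (p^2)) ^ (p^2)) * (u * (((h : GL2 (p^2)) ^ (p^2))⁻¹ * (h : GL2 (p^2))) * u⁻¹)
      rw [hc, ← conj_central_shuffle (scGL p c) u ((scGL p c)⁻¹ * (h : GL2 (p^2)))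
        (scGL_central c u), mul_inv_cancel_left]
    · -- not conjugate
      rintro ⟨g, hg⟩
      apply hknc
      refine ⟨g, ?_⟩
      rw [Subgroup.map_inf _ _ _ (MulAut.conj g).injective, hg, hker_conj g]
end

section
/- For i = 1, 2 let nᵢ, aᵢ, bᵢ, cᵢ, dᵢ ∈ ℤ/p²ℤ with nᵢ ≢ 0 (mod p), and let gᵢ = !![1, nᵢ; 0, 1] + p·!![aᵢ, bᵢ; cᵢ, dᵢ], an element of GL₂(ℤ/p²ℤ). Then g₁ and g₂ are conjugate in GL₂(ℤ/p²ℤ) if and only if a₁ + d₁ ≡ a₂ + d₂ (mod p) and c₁·n₁ ≡ c₂·n₂ (mod p). -/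
open Matrix

section AuxLemmas

variable {p : ℕ} [Fact p.Prime]

lemma aux_neZero : NeZero (p ^ 2) :=
  ⟨pow_ne_zero 2 (Fact.out : p.Prime).ne_zero⟩

lemma aux_hp2 : (p : ZMod (p ^ 2)) * (p : ZMod (p ^ 2)) = 0 := by
  rw [← Nat.cast_mul, ← pow_two, ZMod.natCast_self]

lemma pmul_eq_zero_iff (z : ZMod (p ^ 2)) :
    (p : ZMod (p ^ 2)) * z = 0 ↔ red p z = 0 := by
  haveI : NeZero (p ^ 2) := aux_neZero
  have hp0 : p ≠ 0 := (Fact.out : p.Prime).ne_zero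
  have hz : ((z.val : ℕ) : ZMod (p ^ 2)) = z := by
    rw [ZMod.natCast_val, ZMod.cast_id]
  have hdvd : ∀ m : ℕ, p ^ 2 ∣ p * m ↔ p ∣ m := by
    intro m
    rw [pow_two]
    exact mul_dvd_mul_iff_left hp0
  rw [← hz, ← Nat.cast_mul, map_natCast, ZMod.natCast_eq_zero_iff,
    ZMod.natCast_eq_zero_iff, hdvd]

lemma pmul_eq_iff (x y : ZMod (p ^ 2)) :
    (p : ZMod (p ^ 2)) * x = (p : ZMod (p ^ 2)) * y ↔ red p x = red p y := by
  rw [← sub_eq_zero, ← mul_sub, pmul_eq_zero_iff, map_sub, sub_eq_zero]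

lemma isUnit_of_red_ne_zero (x : ZMod (p ^ 2)) (hx : red p x ≠ 0) : IsUnit x := by
  haveI : NeZero (p ^ 2) := aux_neZero
  have hp : p.Prime := Fact.out
  have hz : ((x.val : ℕ) : ZMod (p ^ 2)) = x := by
    rw [ZMod.natCast_val, ZMod.cast_id]
  have hnd : ¬ p ∣ x.val := by
    intro hdvd
    apply hx
    rw [← hz, map_natCast, ZMod.natCast_eq_zero_iff]
    exact hdvd
  rw [← hz, ZMod.isUnit_iff_coprime]
  exact ((hp.coprime_iff_not_dvd.mpr hnd).symm.pow_right 2)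

lemma smul_mul_smul_zero (A B : Matrix (Fin 2) (Fin 2) (ZMod (p ^ 2))) :
    ((p : ZMod (p ^ 2)) • A) * ((p : ZMod (p ^ 2)) • B) = 0 := by
  rw [smul_mul_assoc, mul_smul_comm, smul_smul, aux_hp2, zero_smul]

lemma kerUnit_semiconj (X U M : Matrix (Fin 2) (Fin 2) (ZMod (p ^ 2))) :
    ((kerUnit X : GL2 (p ^ 2)) : Matrix (Fin 2) (Fin 2) (ZMod (p ^ 2)))
        * (U + (p : ZMod (p ^ 2)) • M)
      = (U + (p : ZMod (p ^ 2)) • (M + X * U - U * X)) *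
        ((kerUnit X : GL2 (p ^ 2)) : Matrix (Fin 2) (Fin 2) (ZMod (p ^ 2))) := by
  show (1 + (p : ZMod (p ^ 2)) • X) * (U + (p : ZMod (p ^ 2)) • M)
      = (U + (p : ZMod (p ^ 2)) • (M + X * U - U * X)) * (1 + (p : ZMod (p ^ 2)) • X)
  have h0 : ∀ A : Matrix (Fin 2) (Fin 2) (ZMod (p ^ 2)),
      (p : ZMod (p ^ 2)) • (p : ZMod (p ^ 2)) • A = 0 := fun A => by
    rw [smul_smul, aux_hp2, zero_smul]
  simp only [mul_add, add_mul, sub_mul, one_mul, mul_one, smul_add, smul_sub,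
    smul_mul_assoc, mul_smul_comm, h0, add_zero, zero_add, smul_zero, sub_zero, neg_zero]
  abel

/-- The unipotent element `!![1,1;0,1]` of `GL₂(ℤ/p²ℤ)`. -/
def uOne (p : ℕ) : GL2 (p ^ 2) where
  val := !![1, 1; 0, 1]
  inv := !![1, -1; 0, 1]
  val_inv := by
    ext i j
    fin_cases i <;> fin_cases j <;>
      simp [Matrix.mul_apply, Fin.sum_univ_succ, Matrix.one_apply]
  inv_val := by
    ext i j
    fin_cases i <;> fin_cases j <;>
      simp [Matrix.mul_apply, Fin.sum_univ_succ, Matrix.one_apply]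

/-- The standard representative with invariants `s` (trace part) and `t`. -/
def stdElt (p : ℕ) (s t : ZMod (p ^ 2)) : GL2 (p ^ 2) :=
  kerUnit !![s, -s; t, -t] * uOne p

lemma stdElt_val (s t : ZMod (p ^ 2)) :
    ((stdElt p s t : GL2 (p ^ 2)) : Matrix (Fin 2) (Fin 2) (ZMod (p ^ 2)))
      = !![1, 1; 0, 1] + (p : ZMod (p ^ 2)) • !![s, 0; t, 0] := by
  show (1 + (p : ZMod (p ^ 2)) • !![s, -s; t, -t]) * !![1, 1; 0, 1] = _
  rw [add_mul, one_mul, smul_mul_assoc]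
  congr 1
  ext i j
  fin_cases i <;> fin_cases j <;>
    simp [Matrix.mul_apply, Fin.sum_univ_succ] <;> ring

lemma conj_to_std (n a b c d : ZMod (p ^ 2)) (hn : red p n ≠ 0)
    (g : GL2 (p ^ 2))
    (hg : (↑g : Matrix (Fin 2) (Fin 2) (ZMod (p ^ 2))) =
      !![1, n; 0, 1] + (p : ZMod (p ^ 2)) • !![a, b; c, d]) :
    IsConj g (stdElt p (a + d) (c * n)) := by
  obtain ⟨v, hv⟩ := isUnit_of_red_ne_zero n hn
  set n' : ZMod (p ^ 2) := ((v⁻¹ : (ZMod (p ^ 2))ˣ) : ZMod (p ^ 2)) with hn'def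
  have hnn' : n * n' = 1 := by rw [← hv, hn'def]; exact v.mul_inv
  have hn'n : n' * n = 1 := by rw [mul_comm]; exact hnn'
  have hDvi : (!![1, 0; 0, n] : Matrix (Fin 2) (Fin 2) (ZMod (p ^ 2))) * !![1, 0; 0, n'] = 1 := by
    ext i j
    fin_cases i <;> fin_cases j <;>
      simp [Matrix.mul_apply, Fin.sum_univ_succ, Matrix.one_apply, hnn']
  have hDiv : (!![1, 0; 0, n'] : Matrix (Fin 2) (Fin 2) (ZMod (p ^ 2))) * !![1, 0; 0, n] = 1 := by
    ext i j
    fin_cases i <;> fin_cases j <;>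
      simp [Matrix.mul_apply, Fin.sum_univ_succ, Matrix.one_apply, hn'n]
  set D : GL2 (p ^ 2) := ⟨!![1, 0; 0, n], !![1, 0; 0, n'], hDvi, hDiv⟩ with hD
  have hDval : (↑D : Matrix (Fin 2) (Fin 2) (ZMod (p ^ 2))) = !![1, 0; 0, n] := rfl
  have hDinv : (↑(D⁻¹) : Matrix (Fin 2) (Fin 2) (ZMod (p ^ 2))) = !![1, 0; 0, n'] := rfl
  have hval : (↑(D * g * D⁻¹) : Matrix (Fin 2) (Fin 2) (ZMod (p ^ 2))) =
      !![1, 1; 0, 1] + (p : ZMod (p ^ 2)) • !![a, b * n'; c * n, d] := by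
    rw [Units.val_mul, Units.val_mul, hg, hDinv, hDval]
    ext i j
    fin_cases i <;> fin_cases j <;> simp [Matrix.mul_apply, Fin.sum_univ_succ]
    all_goals first
      | ring1
      | linear_combination hnn'
      | linear_combination (-1 : ZMod (p ^ 2)) * hnn'
      | linear_combination ((p : ZMod (p ^ 2)) * b) * hnn'
      | linear_combination (-((p : ZMod (p ^ 2)) * b)) * hnn'
      | linear_combination ((1 : ZMod (p ^ 2)) + (p : ZMod (p ^ 2)) * d) * hnn'
      | linear_combination (-((1 : ZMod (p ^ 2)) + (p : ZMod (p ^ 2)) * d)) * hnn'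
  have step1 : IsConj g (D * g * D⁻¹) := isConj_iff.mpr ⟨D, rfl⟩
  have key : (!![a, b * n'; c * n, d] : Matrix (Fin 2) (Fin 2) (ZMod (p ^ 2)))
      + !![-(b * n'), 0; -d, 0] * !![1, 1; 0, 1]
      - !![1, 1; 0, 1] * !![-(b * n'), 0; -d, 0] = !![a + d, 0; c * n, 0] := by
    ext i j
    fin_cases i <;> fin_cases j <;> simp [Matrix.mul_apply, Fin.sum_univ_succ]
    all_goals ring1
  have step2 : IsConj (D * g * D⁻¹) (stdElt p (a + d) (c * n)) := by
    rw [isConj_iff]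
    refine ⟨kerUnit !![-(b * n'), 0; -d, 0], ?_⟩
    rw [mul_inv_eq_iff_eq_mul]
    apply Units.ext
    rw [Units.val_mul, hval, Units.val_mul, stdElt_val, kerUnit_semiconj, key]
  exact step1.trans step2

end AuxLemmas

/-- For `i = 1, 2`, let `gᵢ = !![1, nᵢ; 0, 1] + p•!![aᵢ,bᵢ;cᵢ,dᵢ]` in
`GL₂(ℤ/p²ℤ)` with `nᵢ ≢ 0 (mod p)`. Then `g₁` and `g₂` are conjugate in `GL₂(ℤ/p²ℤ)`
iff `a₁ + d₁ ≡ a₂ + d₂ (mod p)` and `c₁ n₁ ≡ c₂ n₂ (mod p)`. -/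
theorem conj_class_unipotent {p : ℕ} [Fact p.Prime] (hp : Odd p)
    (n₁ n₂ a₁ b₁ c₁ d₁ a₂ b₂ c₂ d₂ : ZMod (p^2))
    (hn₁ : red p n₁ ≠ 0) (hn₂ : red p n₂ ≠ 0)
    (g₁ g₂ : GL2 (p^2))
    (hg₁ : (↑g₁ : Matrix (Fin 2) (Fin 2) (ZMod (p^2))) =
      !![1, n₁; 0, 1] + (p : ZMod (p^2)) • !![a₁, b₁; c₁, d₁])
    (hg₂ : (↑g₂ : Matrix (Fin 2) (Fin 2) (ZMod (p^2))) =
      !![1, n₂; 0, 1] + (p : ZMod (p^2)) • !![a₂, b₂; c₂, d₂]) :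
    IsConj g₁ g₂ ↔
      (red p (a₁ + d₁) = red p (a₂ + d₂) ∧ red p (c₁ * n₁) = red p (c₂ * n₂)) := by
  constructor
  · intro h
    obtain ⟨u, hu⟩ := isConj_iff.mp h
    have htr : Matrix.trace (↑g₂ : Matrix (Fin 2) (Fin 2) (ZMod (p ^ 2)))
        = Matrix.trace (↑g₁ : Matrix (Fin 2) (Fin 2) (ZMod (p ^ 2))) := by
      rw [← hu, Units.val_mul, Units.val_mul, Matrix.trace_mul_comm, ← mul_assoc,
        ← Units.val_mul, inv_mul_cancel, Units.val_one, one_mul]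
    have hdet : Matrix.det (↑g₂ : Matrix (Fin 2) (Fin 2) (ZMod (p ^ 2)))
        = Matrix.det (↑g₁ : Matrix (Fin 2) (Fin 2) (ZMod (p ^ 2))) := by
      rw [← hu, Units.val_mul, Units.val_mul, Matrix.det_mul, Matrix.det_mul,
        mul_comm (Matrix.det (↑u : Matrix (Fin 2) (Fin 2) (ZMod (p ^ 2)))) _, mul_assoc,
        ← Matrix.det_mul, ← Units.val_mul, mul_inv_cancel, Units.val_one, Matrix.det_one,
        mul_one]
    rw [hg₁, hg₂] at htr hdet
    simp [Matrix.trace_fin_two, Matrix.det_fin_two, Matrix.add_apply, Matrix.smul_apply,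
      smul_eq_mul] at htr hdet
    have hp2 : (p : ZMod (p ^ 2)) * (p : ZMod (p ^ 2)) = 0 := aux_hp2
    have e1 : (p : ZMod (p ^ 2)) * (a₁ + d₁) = (p : ZMod (p ^ 2)) * (a₂ + d₂) := by
      linear_combination -htr
    have e2 : (p : ZMod (p ^ 2)) * (c₁ * n₁) = (p : ZMod (p ^ 2)) * (c₂ * n₂) := by
      linear_combination hdet - htr - (a₂ * d₂ - b₂ * c₂ - a₁ * d₁ + b₁ * c₁) * hp2
    exact ⟨(pmul_eq_iff _ _).mp e1, (pmul_eq_iff _ _).mp e2⟩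
  · rintro ⟨h1, h2⟩
    have e1 := conj_to_std n₁ a₁ b₁ c₁ d₁ hn₁ g₁ hg₁
    have e2 := conj_to_std n₂ a₂ b₂ c₂ d₂ hn₂ g₂ hg₂
    have hstd : stdElt p (a₁ + d₁) (c₁ * n₁) = stdElt p (a₂ + d₂) (c₂ * n₂) := by
      apply Units.ext
      rw [stdElt_val, stdElt_val]
      congr 1
      ext i j
      fin_cases i <;> fin_cases j <;> simp [Matrix.smul_apply, smul_eq_mul]
      all_goals first
        | exact (pmul_eq_iff _ _).mpr h1
        | exact (pmul_eq_iff _ _).mpr h2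
    rw [hstd] at e1
    exact e1.trans e2.symm
end
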